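/- Let C be an F_2-linear code in H(m,2) whose minimum distance δ satisfies 3 ≤ δ < m, such that for some integer λ ≥ 1 the set of weight-δ codewords of C forms a 2-(m,δ,λ) design (for every pair of distinct coordinates i,j ∈ M, exactly λ weight-δ codewords α ∈ C satisfy α_i = α_j = 1), and suppose C is self-orthogonal, i.e., C ⊆ C^⊥. Then δ ≥ √(m − 1) + 1. -/

import Mathlib

open Equiv

namespace Paper

/-- A Hamming-graph automorphism of `Fin m → Q` given by entrywise permutations `h`
and a permutation `σ` of the entries. -/
def IsQAutPair {m : ℕ} {Q : Type*} (g : Perm (Fin m → Q)) (h : Fin m → Perm Q)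
    (σ : Perm (Fin m)) : Prop :=
  ∀ α i, g α i = h i (α (σ.symm i))

/-- `g` is an automorphism of the Hamming graph `H(m,q)`. -/
def IsQAut {m : ℕ} {Q : Type*} (g : Perm (Fin m → Q)) : Prop :=
  ∃ h σ, IsQAutPair g h σ

/-- The permutation group `X_i^{Q_i}` induced on the alphabet in entry `i`
by the stabiliser in `X` of the entry `i`. -/
def indQ {m : ℕ} {Q : Type*} (X : Set (Perm (Fin m → Q))) (i : Fin m) : Set (Perm Q) :=
  {π | ∃ g ∈ X, ∃ h σ, IsQAutPair g h σ ∧ σ i = i ∧ h i = π}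

/-- `C_s`, the set of vertices at Hamming distance exactly `s` from the code `C`. -/
def distSet {m : ℕ} {Q : Type*} [DecidableEq Q] (C : Set (Fin m → Q)) (s : ℕ) :
    Set (Fin m → Q) :=
  {v | (∃ c ∈ C, hammingDist v c = s) ∧ ∀ c ∈ C, s ≤ hammingDist v c}

/-- `C` is `(X,s)`-neighbour-transitive: `X` acts transitively on each of
`C = C_0, C_1, …, C_s`. -/
def NbrTrans {m : ℕ} {Q : Type*} [DecidableEq Q] (X : Set (Perm (Fin m → Q)))
    (C : Set (Fin m → Q)) (s : ℕ) : Prop :=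
  ∀ j ≤ s, ∀ u ∈ distSet C j, ∀ v ∈ distSet C j, ∃ g ∈ X, g u = v

/-- `δ` is the minimum distance of the code `C`. -/
def IsMinDist {m : ℕ} {Q : Type*} [DecidableEq Q] (C : Set (Fin m → Q)) (δ : ℕ) : Prop :=
  (∃ u ∈ C, ∃ v ∈ C, u ≠ v ∧ hammingDist u v = δ) ∧
  ∀ u ∈ C, ∀ v ∈ C, u ≠ v → δ ≤ hammingDist u v

/-- The vertex set `V = F_2^m` of the binary Hamming graph `H(m,2)`. -/
abbrev BV (m : ℕ) : Type := Fin m → ZMod 2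

/-- `g` is an automorphism of the binary Hamming graph `H(m,2)`:
`g : v ↦ v^σ + c` for some `σ ∈ Sym(M)` and `c ∈ V`. -/
def IsB2Aut {m : ℕ} (g : Perm (BV m)) : Prop :=
  ∃ (σ : Perm (Fin m)) (c : BV m), ∀ v, g v = (fun i => v (σ.symm i)) + c

/-- The dual of a binary code under the standard inner product. -/
def dualCode {m : ℕ} (D : Set (BV m)) : Set (BV m) :=
  {w | ∀ v ∈ D, (∑ i, v i * w i) = 0}


private lemma zm2 : ∀ x : ZMod 2, x ≠ 0 ↔ x = 1 := by decide

private lemma zm2mul : ∀ x y : ZMod 2, x * y = if x = 1 ∧ y = 1 then 1 else 0 := by decide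

private lemma count_swap {m : ℕ} (T : Finset (BV m)) (A : Finset (Fin m))
    (p : Fin m → BV m → Prop) [∀ j β, Decidable (p j β)] :
    ∑ j ∈ A, (T.filter (p j)).card = ∑ β ∈ T, (A.filter (fun j => p j β)).card := by
  simp_rw [Finset.card_filter]; rw [Finset.sum_comm]

private lemma wt_eq {m : ℕ} (β : BV m) :
    hammingDist β 0 = (Finset.univ.filter fun j => β j = 1).card := by
  unfold hammingDist
  congr 1
  ext j
  simp [zm2 (β j)]

theorem stmt14 (m δ lam : ℕ) (C : Submodule (ZMod 2) (BV m))
    (hδ : IsMinDist (C : Set (BV m)) δ) (h3 : 3 ≤ δ) (hlt : δ < m)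
    (hlam : 1 ≤ lam)
    (hdes : ∀ i j : Fin m, i ≠ j →
      {α : BV m | α ∈ C ∧ hammingDist α 0 = δ ∧ α i = 1 ∧ α j = 1}.ncard = lam)
    -- `C` is self-orthogonal
    (hself : (C : Set (BV m)) ⊆ dualCode (C : Set (BV m))) :
    Real.sqrt ((m : ℝ) - 1) + 1 ≤ (δ : ℝ) := by
  classical
  obtain ⟨⟨u, hu, v, hv, huv, hd⟩, _⟩ := hδ
  set α : BV m := u - v with hαdef
  have hαC : α ∈ C := sub_mem hu hv
  have hwα : hammingDist α 0 = δ := by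
    rw [hammingDist_zero_right, hαdef, ← neg_add_eq_sub, ← hammingDist_eq_hammingNorm, hammingDist_comm]; exact hd
  -- find i with α i = 1
  have hpos : 0 < (Finset.univ.filter fun j => α j = 1).card := by
    rw [← wt_eq, hwα]; omega
  obtain ⟨i, hi⟩ := Finset.card_pos.mp hpos
  have hαi : α i = 1 := (Finset.mem_filter.mp hi).2
  clear hpos
  -- the blocks through i
  set T : Finset (BV m) :=
    Finset.univ.filter (fun β => β ∈ C ∧ hammingDist β 0 = δ ∧ β i = 1) with hTdef
  set r : ℕ := T.card with hrdef
  have hαT : α ∈ T :=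
    Finset.mem_filter.mpr ⟨Finset.mem_univ _, hαC, hwα, hαi⟩
  have hr1 : 1 ≤ r := Finset.card_pos.mpr ⟨α, hαT⟩
  clear_value α T r
  -- design count
  have hcount : ∀ j : Fin m, j ≠ i → (T.filter fun β => β j = 1).card = lam := by
    intro j hj
    have hd2 := hdes i j (Ne.symm hj)
    have hset : {α : BV m | α ∈ C ∧ hammingDist α 0 = δ ∧ α i = 1 ∧ α j = 1}
        = ↑(T.filter fun β => β j = 1) := by
      ext β
      simp only [Set.mem_setOf_eq, Finset.coe_filter, hTdef, Finset.mem_filter,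
        Finset.mem_univ, true_and, Set.mem_setOf_eq]
      tauto
    rw [hset, Set.ncard_coe_finset] at hd2
    exact hd2
  -- weight of block restricted
  have hwtT : ∀ β ∈ T, (Finset.univ.filter fun j => β j = 1).card = δ := by
    intro β hβ
    rw [hTdef] at hβ
    rw [← wt_eq]; exact (Finset.mem_filter.mp hβ).2.2.1
  have hiT : ∀ β ∈ T, β i = 1 := by
    intro β hβ
    rw [hTdef] at hβ
    exact (Finset.mem_filter.mp hβ).2.2.2
  have hCT : ∀ β ∈ T, β ∈ C := by
    intro β hβ
    rw [hTdef] at hβ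
    exact (Finset.mem_filter.mp hβ).2.1
  -- Identity A : (m-1)*lam = r*(δ-1)
  have hA : (m - 1) * lam = r * (δ - 1) := by
    have h1 : ∑ j ∈ Finset.univ.erase i, (T.filter fun β => β j = 1).card
        = ∑ β ∈ T, ((Finset.univ.erase i).filter fun j => β j = 1).card :=
      count_swap T _ _
    have hL : ∑ j ∈ Finset.univ.erase i, (T.filter fun β => β j = 1).card
        = (m - 1) * lam := by
      have hc : ∀ j ∈ Finset.univ.erase i, (T.filter fun β => β j = 1).card = lam :=
        fun j hj => hcount j (Finset.mem_erase.mp hj).1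
      rw [Finset.sum_congr rfl hc, Finset.sum_const, smul_eq_mul,
        Finset.card_erase_of_mem (Finset.mem_univ i)]
      simp
    have hR : ∑ β ∈ T, ((Finset.univ.erase i).filter fun j => β j = 1).card
        = r * (δ - 1) := by
      have hc : ∀ β ∈ T, ((Finset.univ.erase i).filter fun j => β j = 1).card = δ - 1 := by
        intro β hβ
        have hβi : β i = 1 := hiT β hβ
        rw [Finset.filter_erase, Finset.card_erase_of_mem
          (by simp [hβi] : i ∈ Finset.univ.filter fun j => β j = 1), hwtT β hβ]
      rw [Finset.sum_congr rfl hc, Finset.sum_const, smul_eq_mul, ← hrdef]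
    rw [← hL, h1, hR]
  -- evenness of intersections
  have heven : ∀ β ∈ T,
      2 ∣ (Finset.univ.filter fun j => β j = 1 ∧ α j = 1).card := by
    intro β hβ
    have hβC : β ∈ C := hCT β hβ
    have horth : (∑ j, β j * α j) = 0 := hself hαC β hβC
    have : (∑ j, β j * α j)
        = ((Finset.univ.filter fun j => β j = 1 ∧ α j = 1).card : ZMod 2) := by
      rw [Finset.sum_congr rfl (fun j _ => zm2mul (β j) (α j)), Finset.sum_boole]
    rw [this] at horth
    exact (ZMod.natCast_eq_zero_iff _ 2).mp horth
  -- Identity/bound B : (δ-1) + (r-1) ≤ (δ-1)*lam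
  set A' : Finset (Fin m) := (Finset.univ.filter fun j => α j = 1).erase i with hA'def
  clear_value A'
  have hA'card : A'.card = δ - 1 := by
    rw [hA'def, Finset.card_erase_of_mem hi, ← wt_eq, hwα]
  have hB : (δ - 1) + (r - 1) ≤ (δ - 1) * lam := by
    -- each term ≥ 1
    have hterm : ∀ β ∈ T, 1 ≤ (A'.filter fun j => β j = 1).card := by
      intro β hβ
      have hβi : β i = 1 := hiT β hβ
      set S : Finset (Fin m) := Finset.univ.filter fun j => β j = 1 ∧ α j = 1 with hSdef
      have hiS : i ∈ S := by simp [hSdef, hβi, hαi]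
      have hSe : 2 ∣ S.card := by rw [hSdef]; exact heven β hβ
      have hSpos := Finset.card_pos.mpr ⟨i, hiS⟩
      clear_value S
      have hS2 : 2 ≤ S.card := by omega
      have hAS : (A'.filter fun j => β j = 1) = S.erase i := by
        ext j
        simp only [hA'def, hSdef, Finset.mem_filter, Finset.mem_erase,
          Finset.mem_univ, true_and]
        tauto
      rw [hAS, Finset.card_erase_of_mem hiS]
      omega
    -- term at α equals δ - 1
    have htα : (A'.filter fun j => α j = 1).card = δ - 1 := by
      have : (A'.filter fun j => α j = 1) = A' := by
        apply Finset.filter_true_of_mem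
        intro j hj
        rw [hA'def] at hj
        exact (Finset.mem_filter.mp (Finset.mem_erase.mp hj).2).2
      rw [this, hA'card]
    have h1 : ∑ j ∈ A', (T.filter fun β => β j = 1).card
        = ∑ β ∈ T, (A'.filter fun j => β j = 1).card := count_swap T _ _
    have hL : ∑ j ∈ A', (T.filter fun β => β j = 1).card = (δ - 1) * lam := by
      have hc : ∀ j ∈ A', (T.filter fun β => β j = 1).card = lam := by
        intro j hj
        rw [hA'def] at hj
        exact hcount j (Finset.mem_erase.mp hj).1
      rw [Finset.sum_congr rfl hc, Finset.sum_const, smul_eq_mul, hA'card]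
    have hsplit : ∑ β ∈ T, (A'.filter fun j => β j = 1).card
        = (A'.filter fun j => α j = 1).card
          + ∑ β ∈ T.erase α, (A'.filter fun j => β j = 1).card :=
      (Finset.add_sum_erase T _ hαT).symm
    have hrest : (T.erase α).card ≤ ∑ β ∈ T.erase α, (A'.filter fun j => β j = 1).card := by
      rw [Finset.card_eq_sum_ones]
      exact Finset.sum_le_sum fun β hβ => hterm β (Finset.mem_of_mem_erase hβ)
    have hcerase : (T.erase α).card = r - 1 := by
      rw [Finset.card_erase_of_mem hαT, hrdef]
    rw [← hL, h1, hsplit, htα]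
    exact Nat.add_le_add_left (hcerase ▸ hrest) _
  -- final arithmetic
  obtain ⟨d, rfl⟩ : ∃ d, δ = d + 1 := ⟨δ - 1, by omega⟩
  obtain ⟨m', rfl⟩ : ∃ m', m = m' + 1 := ⟨m - 1, by omega⟩
  obtain ⟨r', hr'⟩ : ∃ r', r = r' + 1 := ⟨r - 1, by omega⟩
  have hd2 : 2 ≤ d := by omega
  have hA2 : m' * lam = r' * d + d := by
    have := hA; simp only [Nat.add_sub_cancel, hr'] at this
    rw [this]; ring
  have hB2 : d + r' ≤ d * lam := by
    have := hB; simp only [Nat.add_sub_cancel, hr'] at this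
    omega
  have key : (m' : ℤ) ≤ (d : ℤ) ^ 2 := by
    have hAz : (m' : ℤ) * lam = (r' : ℤ) * d + d := by exact_mod_cast hA2
    have hBz : (d : ℤ) + r' ≤ (d : ℤ) * lam := by exact_mod_cast hB2
    have hdz : (2 : ℤ) ≤ (d : ℤ) := by exact_mod_cast hd2
    have hlz : (1 : ℤ) ≤ (lam : ℤ) := by exact_mod_cast hlam
    have hrz : (0 : ℤ) ≤ (r' : ℤ) := Int.natCast_nonneg r'
    nlinarith [mul_le_mul_of_nonneg_right hBz (by linarith : (0:ℤ) ≤ (d:ℤ))]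
  -- to reals
  have keyR : ((m' : ℝ) + 1 : ℝ) - 1 ≤ ((d : ℝ)) ^ 2 := by
    have : (m' : ℝ) ≤ (d : ℝ) ^ 2 := by exact_mod_cast key
    linarith
  have h1 : Real.sqrt (((m' : ℝ) + 1) - 1) ≤ (d : ℝ) := by
    have := Real.sqrt_le_sqrt keyR
    rwa [Real.sqrt_sq (by positivity : (0:ℝ) ≤ (d : ℝ))] at this
  push_cast
  push_cast at h1
  linarith

end Paper
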